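/- Let ρ(x) = (x₁²+x₂²)² + 16x₃² and u = (3/4)ln ρ. At every point where x₁²+x₂² ≠ 0, the function u satisfies the horizontal inverse mean curvature level set equation: the trace of (I - ∇₀u⊗∇₀u/‖∇₀u‖²)(∇₀²u)* equals ‖∇₀u‖², where ∇₀u = (X₁u, X₂u) and (∇₀²u)* is the symmetrized horizontal Hessian with entries ((∇₀²u)*)₁₁ = X₁²u, ((∇₀²u)*)₂₂ = X₂²u, ((∇₀²u)*)₁₂ = ((∇₀²u)*)₂₁ = (X₁X₂u + X₂X₁u)/2. -/

import Mathlib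

/-- The Heisenberg horizontal vector field `X₁ = ∂_{x₁} - (x₂/2)∂_{x₃}`. -/
noncomputable def X1 (f : ℝ × ℝ × ℝ → ℝ) (x : ℝ × ℝ × ℝ) : ℝ :=
  deriv (fun t => f (t, x.2.1, x.2.2)) x.1
    - x.2.1 / 2 * deriv (fun t => f (x.1, x.2.1, t)) x.2.2

/-- The Heisenberg horizontal vector field `X₂ = ∂_{x₂} + (x₁/2)∂_{x₃}`. -/
noncomputable def X2 (f : ℝ × ℝ × ℝ → ℝ) (x : ℝ × ℝ × ℝ) : ℝ :=
  deriv (fun t => f (x.1, t, x.2.2)) x.2.1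
    + x.1 / 2 * deriv (fun t => f (x.1, x.2.1, t)) x.2.2

/-- `ρ(x) = (x₁²+x₂²)² + 16x₃²`. -/
def rho (x : ℝ × ℝ × ℝ) : ℝ := (x.1 ^ 2 + x.2.1 ^ 2) ^ 2 + 16 * x.2.2 ^ 2



noncomputable def uu : ℝ × ℝ × ℝ → ℝ := fun y => 3 / 4 * Real.log (rho y)

lemma cubicD (c3 c2 c1 c0 t : ℝ) :
    HasDerivAt (fun s : ℝ => c3*s^3+c2*s^2+c1*s+c0) (3*c3*t^2+2*c2*t+c1) t := by
  have h := ((((hasDerivAt_pow 3 t).const_mul c3).add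
      ((hasDerivAt_pow 2 t).const_mul c2)).add
      ((hasDerivAt_id t).const_mul c1)).add_const c0
  exact h.congr_deriv (by ring)

lemma hR1 (a b c : ℝ) : HasDerivAt (fun t : ℝ => (t^2+b^2)^2+16*c^2) (4*a*(a^2+b^2)) a := by
  have h := (((hasDerivAt_pow 2 a).add_const (b^2)).pow 2).add_const (16*c^2)
  exact h.congr_deriv (by ring)

lemma hR2 (a b c : ℝ) : HasDerivAt (fun t : ℝ => (a^2+t^2)^2+16*c^2) (4*b*(a^2+b^2)) b := by
  have e : (fun t : ℝ => (a^2+t^2)^2+16*c^2) = fun t : ℝ => (t^2+a^2)^2+16*c^2 := by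
    funext t; ring
  rw [e]
  have h := hR1 b a c
  convert h using 1
  ring

lemma hR3 (a b c : ℝ) : HasDerivAt (fun t : ℝ => (a^2+b^2)^2+16*t^2) (32*c) c := by
  have h := (((hasDerivAt_pow 2 c).const_mul 16)).const_add ((a^2+b^2)^2)
  exact h.congr_deriv (by ring)

lemma hu1 (a b c : ℝ) (h : (a^2+b^2)^2+16*c^2 ≠ 0) :
    HasDerivAt (fun t : ℝ => 3/4 * Real.log ((t^2+b^2)^2+16*c^2))
      (3*a*(a^2+b^2)/((a^2+b^2)^2+16*c^2)) a := by
  have h2 := ((hR1 a b c).log h).const_mul (3/4 : ℝ)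
  exact h2.congr_deriv (by ring)

lemma hu3 (a b c : ℝ) (h : (a^2+b^2)^2+16*c^2 ≠ 0) :
    HasDerivAt (fun t : ℝ => 3/4 * Real.log ((a^2+b^2)^2+16*t^2))
      (24*c/((a^2+b^2)^2+16*c^2)) c := by
  have h2 := ((hR3 a b c).log h).const_mul (3/4 : ℝ)
  exact h2.congr_deriv (by ring)

lemma X1u (a b c : ℝ) (h : (a^2+b^2)^2+16*c^2 ≠ 0) :
    X1 uu (a, b, c) = (3*a*(a^2+b^2) - 12*b*c)/((a^2+b^2)^2+16*c^2) := by
  show deriv (fun t => uu (t, b, c)) a - b / 2 * deriv (fun t => uu (a, b, t)) c = _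
  have e1 : (fun t => uu (t, b, c)) = fun t : ℝ => 3/4 * Real.log ((t^2+b^2)^2+16*c^2) := rfl
  have e2 : (fun t => uu (a, b, t)) = fun t : ℝ => 3/4 * Real.log ((a^2+b^2)^2+16*t^2) := rfl
  rw [e1, e2, (hu1 a b c h).deriv, (hu3 a b c h).deriv]
  field_simp
  ring

lemma X2u (a b c : ℝ) (h : (a^2+b^2)^2+16*c^2 ≠ 0) :
    X2 uu (a, b, c) = (3*b*(a^2+b^2) + 12*a*c)/((a^2+b^2)^2+16*c^2) := by
  show deriv (fun t => uu (a, t, c)) b + a / 2 * deriv (fun t => uu (a, b, t)) c = _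
  have e1 : (fun t => uu (a, t, c)) = fun t : ℝ => 3/4 * Real.log ((a^2+t^2)^2+16*c^2) := rfl
  have e2 : (fun t => uu (a, b, t)) = fun t : ℝ => 3/4 * Real.log ((a^2+b^2)^2+16*t^2) := rfl
  have h' : (b^2+a^2)^2+16*c^2 ≠ 0 := by rw [add_comm (b^2)]; exact h
  have hb : HasDerivAt (fun t : ℝ => 3/4 * Real.log ((a^2+t^2)^2+16*c^2))
      (3*b*(a^2+b^2)/((a^2+b^2)^2+16*c^2)) b := by
    have h2 := ((hR2 a b c).log h).const_mul (3/4 : ℝ)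
    exact h2.congr_deriv (by ring)
  rw [e1, e2, hb.deriv, (hu3 a b c h).deriv]
  field_simp
  ring

lemma deriv_ratl {F N D : ℝ → ℝ} {N' D' t : ℝ}
    (hev : F =ᶠ[nhds t] fun s => N s / D s)
    (hN : HasDerivAt N N' t) (hD : HasDerivAt D D' t) (h0 : D t ≠ 0) :
    deriv F t = (N' * D t - N t * D') / (D t)^2 := by
  rw [hev.deriv_eq]
  exact (hN.div hD h0).deriv


set_option maxHeartbeats 1000000 in
/-- `u = (3/4)ln ρ` satisfies the level-set equation of the horizontal inverse
mean curvature flow: `Tr[(I - ∇₀u⊗∇₀u/‖∇₀u‖²)(∇₀²u)*] = ‖∇₀u‖²` off the `x₃`-axis. -/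
theorem u_satisfies_HIMCF_level_set_equation (x : ℝ × ℝ × ℝ)
    (hx : x.1 ^ 2 + x.2.1 ^ 2 ≠ 0) :
    let u : ℝ × ℝ × ℝ → ℝ := fun y => 3 / 4 * Real.log (rho y)
    let a := X1 u x
    let b := X2 u x
    let A11 := X1 (X1 u) x
    let A22 := X2 (X2 u) x
    let A12 := (X1 (X2 u) x + X2 (X1 u) x) / 2
    (1 - a ^ 2 / (a ^ 2 + b ^ 2)) * A11 + (1 - b ^ 2 / (a ^ 2 + b ^ 2)) * A22
      - 2 * (a * b / (a ^ 2 + b ^ 2)) * A12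
      = a ^ 2 + b ^ 2 := by
  obtain ⟨p, q, r⟩ := x
  simp only at hx
  intro u a b A11 A22 A12
  have hs : 0 < p^2 + q^2 := lt_of_le_of_ne (by positivity) (Ne.symm hx)
  have hRpos : 0 < (p^2+q^2)^2 + 16*r^2 := by nlinarith [pow_pos hs 2, sq_nonneg r]
  have hR : (p^2+q^2)^2 + 16*r^2 ≠ 0 := ne_of_gt hRpos
  have hev1 : ∀ᶠ t in nhds p, ((t^2+q^2)^2+16*r^2) ≠ 0 := by
    have hc : ContinuousAt (fun t : ℝ => (t^2+q^2)^2+16*r^2) p :=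
      ((((continuous_pow 2).add continuous_const).pow 2).add continuous_const).continuousAt
    exact hc.eventually_ne hR
  have hev2 : ∀ᶠ t in nhds q, ((p^2+t^2)^2+16*r^2) ≠ 0 := by
    have hc : ContinuousAt (fun t : ℝ => (p^2+t^2)^2+16*r^2) q :=
      (((continuous_const.add (continuous_pow 2)).pow 2).add continuous_const).continuousAt
    exact hc.eventually_ne hR
  have hev3 : ∀ᶠ t in nhds r, ((p^2+q^2)^2+16*t^2) ≠ 0 := by
    have hc : ContinuousAt (fun t : ℝ => (p^2+q^2)^2+16*t^2) r :=
      (continuous_const.add (continuous_const.mul (continuous_pow 2))).continuousAt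
    exact hc.eventually_ne hR
  -- numerator derivatives
  have hN1 : HasDerivAt (fun t : ℝ => 3*t*(t^2+q^2)-12*q*r) (9*p^2+3*q^2) p := by
    have e : (fun t : ℝ => 3*t*(t^2+q^2)-12*q*r)
        = fun s : ℝ => 3*s^3+0*s^2+(3*q^2)*s+(-(12*q*r)) := by funext s; ring
    rw [e]; convert cubicD 3 0 (3*q^2) (-(12*q*r)) p using 1; ring
  have hN2 : HasDerivAt (fun t : ℝ => 3*p*(p^2+t^2)-12*t*r) (6*p*q-12*r) q := by
    have e : (fun t : ℝ => 3*p*(p^2+t^2)-12*t*r)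
        = fun s : ℝ => 0*s^3+(3*p)*s^2+(-(12*r))*s+(3*p^3) := by funext s; ring
    rw [e]; convert cubicD 0 (3*p) (-(12*r)) (3*p^3) q using 1; ring
  have hN3 : HasDerivAt (fun t : ℝ => 3*p*(p^2+q^2)-12*q*t) (-(12*q)) r := by
    have e : (fun t : ℝ => 3*p*(p^2+q^2)-12*q*t)
        = fun s : ℝ => 0*s^3+0*s^2+(-(12*q))*s+(3*p*(p^2+q^2)) := by funext s; ring
    rw [e]; convert cubicD 0 0 (-(12*q)) (3*p*(p^2+q^2)) r using 1; ring
  have hM1 : HasDerivAt (fun t : ℝ => 3*q*(t^2+q^2)+12*t*r) (6*p*q+12*r) p := by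
    have e : (fun t : ℝ => 3*q*(t^2+q^2)+12*t*r)
        = fun s : ℝ => 0*s^3+(3*q)*s^2+(12*r)*s+(3*q^3) := by funext s; ring
    rw [e]; convert cubicD 0 (3*q) (12*r) (3*q^3) p using 1; ring
  have hM2 : HasDerivAt (fun t : ℝ => 3*t*(p^2+t^2)+12*p*r) (3*p^2+9*q^2) q := by
    have e : (fun t : ℝ => 3*t*(p^2+t^2)+12*p*r)
        = fun s : ℝ => 3*s^3+0*s^2+(3*p^2)*s+(12*p*r) := by funext s; ring
    rw [e]; convert cubicD 3 0 (3*p^2) (12*p*r) q using 1; ring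
  have hM3 : HasDerivAt (fun t : ℝ => 3*q*(p^2+q^2)+12*p*t) (12*p) r := by
    have e : (fun t : ℝ => 3*q*(p^2+q^2)+12*p*t)
        = fun s : ℝ => 0*s^3+0*s^2+(12*p)*s+(3*q*(p^2+q^2)) := by funext s; ring
    rw [e]; convert cubicD 0 0 (12*p) (3*q*(p^2+q^2)) r using 1; ring
  -- eventual equalities
  have he1X1 : (fun t => X1 uu (t,q,r))
      =ᶠ[nhds p] fun t => (3*t*(t^2+q^2)-12*q*r)/((t^2+q^2)^2+16*r^2) := by
    filter_upwards [hev1] with t ht using X1u t q r ht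
  have he2X1 : (fun t => X1 uu (p,t,r))
      =ᶠ[nhds q] fun t => (3*p*(p^2+t^2)-12*t*r)/((p^2+t^2)^2+16*r^2) := by
    filter_upwards [hev2] with t ht using X1u p t r ht
  have he3X1 : (fun t => X1 uu (p,q,t))
      =ᶠ[nhds r] fun t => (3*p*(p^2+q^2)-12*q*t)/((p^2+q^2)^2+16*t^2) := by
    filter_upwards [hev3] with t ht using X1u p q t ht
  have he1X2 : (fun t => X2 uu (t,q,r))
      =ᶠ[nhds p] fun t => (3*q*(t^2+q^2)+12*t*r)/((t^2+q^2)^2+16*r^2) := by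
    filter_upwards [hev1] with t ht using X2u t q r ht
  have he2X2 : (fun t => X2 uu (p,t,r))
      =ᶠ[nhds q] fun t => (3*t*(p^2+t^2)+12*p*r)/((p^2+t^2)^2+16*r^2) := by
    filter_upwards [hev2] with t ht using X2u p t r ht
  have he3X2 : (fun t => X2 uu (p,q,t))
      =ᶠ[nhds r] fun t => (3*q*(p^2+q^2)+12*p*t)/((p^2+q^2)^2+16*t^2) := by
    filter_upwards [hev3] with t ht using X2u p q t ht
  have hd1X1 := deriv_ratl he1X1 hN1 (hR1 p q r) hR
  have hd2X1 := deriv_ratl he2X1 hN2 (hR2 p q r) hR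
  have hd3X1 := deriv_ratl he3X1 hN3 (hR3 p q r) hR
  have hd1X2 := deriv_ratl he1X2 hM1 (hR1 p q r) hR
  have hd2X2 := deriv_ratl he2X2 hM2 (hR2 p q r) hR
  have hd3X2 := deriv_ratl he3X2 hM3 (hR3 p q r) hR
  have ha : a = (3*p*(p^2+q^2) - 12*q*r)/((p^2+q^2)^2+16*r^2) := X1u p q r hR
  have hb : b = (3*q*(p^2+q^2) + 12*p*r)/((p^2+q^2)^2+16*r^2) := X2u p q r hR
  have hA11 : A11 = (((9*p^2+3*q^2) * ((p^2+q^2)^2+16*r^2)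
        - (3*p*(p^2+q^2)-12*q*r)*(4*p*(p^2+q^2))) / ((p^2+q^2)^2+16*r^2)^2)
      - q/2 * (((-(12*q)) * ((p^2+q^2)^2+16*r^2)
        - (3*p*(p^2+q^2)-12*q*r)*(32*r)) / ((p^2+q^2)^2+16*r^2)^2) := by
    show deriv (fun t => X1 uu (t,q,r)) p - q/2 * deriv (fun t => X1 uu (p,q,t)) r = _
    rw [hd1X1, hd3X1]
  have hA22 : A22 = (((3*p^2+9*q^2) * ((p^2+q^2)^2+16*r^2)
        - (3*q*(p^2+q^2)+12*p*r)*(4*q*(p^2+q^2))) / ((p^2+q^2)^2+16*r^2)^2)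
      + p/2 * (((12*p) * ((p^2+q^2)^2+16*r^2)
        - (3*q*(p^2+q^2)+12*p*r)*(32*r)) / ((p^2+q^2)^2+16*r^2)^2) := by
    show deriv (fun t => X2 uu (p,t,r)) q + p/2 * deriv (fun t => X2 uu (p,q,t)) r = _
    rw [hd2X2, hd3X2]
  have hA12 : A12 = ((((6*p*q+12*r) * ((p^2+q^2)^2+16*r^2)
        - (3*q*(p^2+q^2)+12*p*r)*(4*p*(p^2+q^2))) / ((p^2+q^2)^2+16*r^2)^2
        - q/2 * (((12*p) * ((p^2+q^2)^2+16*r^2)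
        - (3*q*(p^2+q^2)+12*p*r)*(32*r)) / ((p^2+q^2)^2+16*r^2)^2))
      + (((6*p*q-12*r) * ((p^2+q^2)^2+16*r^2)
        - (3*p*(p^2+q^2)-12*q*r)*(4*q*(p^2+q^2))) / ((p^2+q^2)^2+16*r^2)^2
        + p/2 * (((-(12*q)) * ((p^2+q^2)^2+16*r^2)
        - (3*p*(p^2+q^2)-12*q*r)*(32*r)) / ((p^2+q^2)^2+16*r^2)^2))) / 2 := by
    show ((deriv (fun t => X2 uu (t,q,r)) p - q/2 * deriv (fun t => X2 uu (p,q,t)) r)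
        + (deriv (fun t => X1 uu (p,t,r)) q + p/2 * deriv (fun t => X1 uu (p,q,t)) r)) / 2 = _
    rw [hd1X2, hd3X2, hd2X1, hd3X1]
  have hnum : (3*p*(p^2+q^2) - 12*q*r)^2 + (3*q*(p^2+q^2) + 12*p*r)^2 ≠ 0 := by
    have e : (3*p*(p^2+q^2) - 12*q*r)^2 + (3*q*(p^2+q^2) + 12*p*r)^2
        = 9*(p^2+q^2)*((p^2+q^2)^2+16*r^2) := by ring
    rw [e]
    exact ne_of_gt (by positivity)
  rw [ha, hb, hA11, hA22, hA12]
  rw [div_pow, div_pow, ← add_div]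
  have hnum2 : (3*p*(p^2+q^2) - 12*q*r)^2 + (3*q*(p^2+q^2) + 12*p*r)^2 = 9*(p^2+q^2)*((p^2+q^2)^2+16*r^2) := by ring
  rw [hnum2]
  field_simp
  ring
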